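/- arXiv:1911.02569 — 2 statements merged into one kernel-verified Lean document; each statement's English description precedes it below -/
import Mathlib

section
/- Let s, m₁, m₂ be natural numbers with 1 ≤ s ≤ m₁ ≤ m₂. Then ((m₁+m₂−2s)! · m₁! · m₂!) / ((m₁+m₂−s)! · (m₁−s)! · (m₂−s)!) = ∏_{j=0}^{s-1} (m₁−j)(m₂−j)/(m₁+m₂−s−j) ≤ m₁^s · exp(−s(s−1)/(2m₁)). -/
open Real Finset

lemma prod_sub_eq_factorial_div (n k : ℕ) (h : k ≤ n) :
    ∏ j ∈ Finset.range k, ((n : ℝ) - j) =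
      (Nat.factorial n : ℝ) / (Nat.factorial (n - k)) := by
  induction k with
  | zero =>
    simp only [Finset.range_zero, Finset.prod_empty, Nat.sub_zero]
    exact (div_self (Nat.cast_ne_zero.mpr (Nat.factorial_ne_zero n))).symm
  | succ k ih =>
    have hk : k ≤ n := Nat.le_of_succ_le h
    have hk' : k < n := h
    rw [Finset.prod_range_succ, ih hk]
    have h1 : n - k = (n - (k + 1)) + 1 := by omega
    have hcast : (n : ℝ) - k = ((n - k : ℕ) : ℝ) := by
      push_cast [Nat.cast_sub hk]; ring
    rw [hcast]
    have hfac : ((n - k).factorial : ℝ)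
        = (((n - (k+1) : ℕ) : ℝ) + 1) * ((n - (k+1)).factorial : ℝ) := by
      rw [h1, Nat.factorial_succ]; push_cast; ring
    have h1c : ((n - k : ℕ) : ℝ) = ((n - (k+1) : ℕ) : ℝ) + 1 := by exact_mod_cast h1
    have h2 : ((n - (k+1)).factorial : ℝ) ≠ 0 := Nat.cast_ne_zero.mpr (Nat.factorial_ne_zero _)
    have h3 : ((n - (k+1) : ℕ) : ℝ) + 1 ≠ 0 := by positivity
    rw [hfac, h1c]
    generalize ((n - (k+1)).factorial : ℝ) = b at h2 ⊢
    generalize hA : ((n - (k+1) : ℕ) : ℝ) = A at h3 ⊢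
    field_simp

theorem factorial_ratio_bound (s m₁ m₂ : ℕ) (hs : 1 ≤ s) (h1 : s ≤ m₁) (h2 : m₁ ≤ m₂) :
    ((Nat.factorial (m₁ + m₂ - 2 * s) : ℝ) * Nat.factorial m₁ * Nat.factorial m₂) /
        ((Nat.factorial (m₁ + m₂ - s) : ℝ) * Nat.factorial (m₁ - s) * Nat.factorial (m₂ - s)) =
      ∏ j ∈ Finset.range s,
        ((m₁ : ℝ) - j) * ((m₂ : ℝ) - j) / ((m₁ : ℝ) + m₂ - s - j) ∧
    ∏ j ∈ Finset.range s,
        ((m₁ : ℝ) - j) * ((m₂ : ℝ) - j) / ((m₁ : ℝ) + m₂ - s - j) ≤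
      (m₁ : ℝ) ^ s * Real.exp (-(s * (s - 1) : ℝ) / (2 * m₁)) := by
  have hsm2 : s ≤ m₂ := le_trans h1 h2
  have hss : s ≤ m₁ + m₂ - s := by omega
  constructor
  · -- equality
    have e1 : ∏ j ∈ Finset.range s, (((m₁ : ℝ) - j) * ((m₂ : ℝ) - j) / ((m₁ : ℝ) + m₂ - s - j))
        = (∏ j ∈ Finset.range s, ((m₁ : ℝ) - j)) * (∏ j ∈ Finset.range s, ((m₂ : ℝ) - j)) /
          (∏ j ∈ Finset.range s, ((m₁ : ℝ) + m₂ - s - j)) := by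
      rw [Finset.prod_div_distrib, Finset.prod_mul_distrib]
    have e2 : ∏ j ∈ Finset.range s, ((m₁ : ℝ) + m₂ - s - j)
        = ∏ j ∈ Finset.range s, (((m₁ + m₂ - s : ℕ) : ℝ) - j) := by
      apply Finset.prod_congr rfl
      intro j hj
      have : ((m₁ + m₂ - s : ℕ) : ℝ) = (m₁ : ℝ) + m₂ - s := by
        push_cast [Nat.cast_sub (by omega : s ≤ m₁ + m₂)]; ring
      rw [this]
    have f1 := prod_sub_eq_factorial_div m₁ s h1
    have f2 := prod_sub_eq_factorial_div m₂ s hsm2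
    have f3 := prod_sub_eq_factorial_div (m₁ + m₂ - s) s hss
    have h2s : m₁ + m₂ - s - s = m₁ + m₂ - 2 * s := by omega
    rw [e1, e2, f1, f2, f3, h2s]
    have n1 : ((m₁ - s).factorial : ℝ) ≠ 0 := Nat.cast_ne_zero.mpr (Nat.factorial_ne_zero _)
    have n2 : ((m₂ - s).factorial : ℝ) ≠ 0 := Nat.cast_ne_zero.mpr (Nat.factorial_ne_zero _)
    have n3 : ((m₁ + m₂ - s).factorial : ℝ) ≠ 0 := Nat.cast_ne_zero.mpr (Nat.factorial_ne_zero _)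
    have n4 : ((m₁ + m₂ - 2 * s).factorial : ℝ) ≠ 0 := Nat.cast_ne_zero.mpr (Nat.factorial_ne_zero _)
    field_simp
  · -- bound
    have hm1pos : (0 : ℝ) < m₁ := by exact_mod_cast lt_of_lt_of_le hs h1
    have step : ∀ j ∈ Finset.range s,
        ((m₁ : ℝ) - j) * ((m₂ : ℝ) - j) / ((m₁ : ℝ) + m₂ - s - j)
          ≤ (m₁ : ℝ) * Real.exp (-(j : ℝ) / m₁) := by
      intro j hj
      rw [Finset.mem_range] at hj
      have hjm1 : (j : ℝ) ≤ m₁ := by exact_mod_cast le_trans (le_of_lt hj) h1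
      have hjm2 : (j : ℝ) ≤ m₂ := by exact_mod_cast le_trans (le_of_lt hj) hsm2
      have hden : (0 : ℝ) < (m₁ : ℝ) + m₂ - s - j := by
        have : (j : ℝ) < s := by exact_mod_cast hj
        have hs1 : (s : ℝ) ≤ m₁ := by exact_mod_cast h1
        have hs2 : (s : ℝ) ≤ m₂ := by exact_mod_cast hsm2
        linarith
      have hnum2 : (m₂ : ℝ) - j ≤ (m₁ : ℝ) + m₂ - s - j := by
        have hs1 : (s : ℝ) ≤ m₁ := by exact_mod_cast h1
        linarith
      have step1 : ((m₁ : ℝ) - j) * ((m₂ : ℝ) - j) / ((m₁ : ℝ) + m₂ - s - j) ≤ (m₁ : ℝ) - j := by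
        rw [div_le_iff₀ hden]
        have : (0 : ℝ) ≤ (m₁ : ℝ) - j := by linarith
        nlinarith
      have step2 : (m₁ : ℝ) - j ≤ (m₁ : ℝ) * Real.exp (-(j : ℝ) / m₁) := by
        have hexp : 1 - (j : ℝ) / m₁ ≤ Real.exp (-((j : ℝ) / m₁)) := by
          have := Real.add_one_le_exp (-((j : ℝ) / m₁))
          linarith
        have h0 : (m₁ : ℝ) * (1 - (j : ℝ) / m₁) = (m₁ : ℝ) - j := by
          field_simp
        calc (m₁ : ℝ) - j = (m₁ : ℝ) * (1 - (j : ℝ) / m₁) := h0.symm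
          _ ≤ (m₁ : ℝ) * Real.exp (-((j : ℝ) / m₁)) := by
              exact mul_le_mul_of_nonneg_left hexp (le_of_lt hm1pos)
          _ = (m₁ : ℝ) * Real.exp (-(j : ℝ) / m₁) := by rw [neg_div]
      linarith
    have hnonneg : ∀ j ∈ Finset.range s,
        (0 : ℝ) ≤ ((m₁ : ℝ) - j) * ((m₂ : ℝ) - j) / ((m₁ : ℝ) + m₂ - s - j) := by
      intro j hj
      rw [Finset.mem_range] at hj
      have hjm1 : (j : ℝ) ≤ m₁ := by exact_mod_cast le_trans (le_of_lt hj) h1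
      have hjm2 : (j : ℝ) ≤ m₂ := by exact_mod_cast le_trans (le_of_lt hj) hsm2
      have hden : (0 : ℝ) < (m₁ : ℝ) + m₂ - s - j := by
        have : (j : ℝ) < s := by exact_mod_cast hj
        have hs1 : (s : ℝ) ≤ m₁ := by exact_mod_cast h1
        have hs2 : (s : ℝ) ≤ m₂ := by exact_mod_cast hsm2
        linarith
      apply div_nonneg _ hden.le
      apply mul_nonneg <;> linarith
    calc ∏ j ∈ Finset.range s, ((m₁ : ℝ) - j) * ((m₂ : ℝ) - j) / ((m₁ : ℝ) + m₂ - s - j)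
        ≤ ∏ j ∈ Finset.range s, (m₁ : ℝ) * Real.exp (-(j : ℝ) / m₁) :=
          Finset.prod_le_prod hnonneg step
      _ = (m₁ : ℝ) ^ s * ∏ j ∈ Finset.range s, Real.exp (-(j : ℝ) / m₁) := by
          rw [Finset.prod_mul_distrib, Finset.prod_const, Finset.card_range]
      _ = (m₁ : ℝ) ^ s * Real.exp (∑ j ∈ Finset.range s, (-(j : ℝ) / m₁)) := by
          rw [Real.exp_sum]
      _ = (m₁ : ℝ) ^ s * Real.exp (-(s * (s - 1) : ℝ) / (2 * m₁)) := by
          congr 1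
          have hsum : (∑ j ∈ Finset.range s, (j : ℝ)) = (s : ℝ) * ((s : ℝ) - 1) / 2 := by
            have h := Finset.sum_range_id_mul_two s
            have h2 : ((∑ i ∈ Finset.range s, i : ℕ) : ℝ) * 2 = (s : ℝ) * ((s : ℝ) - 1) := by
              have hc : ((s * (s - 1) : ℕ) : ℝ) = (s : ℝ) * ((s : ℝ) - 1) := by
                push_cast [Nat.cast_sub hs]; ring
              rw [← hc]; exact_mod_cast h
            push_cast at h2
            linarith
          have hm1ne : (m₁ : ℝ) ≠ 0 := by positivity
          have : ∑ j ∈ Finset.range s, (-(j : ℝ) / (m₁ : ℝ))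
              = (∑ j ∈ Finset.range s, (j : ℝ)) * (-(1 / (m₁ : ℝ))) := by
            rw [Finset.sum_mul]
            apply Finset.sum_congr rfl
            intro j _
            field_simp
          rw [this, hsum]
          field_simp
end

section
/- Fix A ∈ ℝ and let γ = 256/27, Δ_k = 6(4k+1)!/(k!(3k+3)!), λ_n = (1/2)log n + (5/2)log log n + A, and ω_n = λ_n/√(γn). Let (a_n) be any sequence with a_n → ∞ and a_n = o(√(log n)), and let K_n = [ (1/4)log n − a_n√(log n), (1/4)log n + a_n√(log n) ]. Then lim_{n→∞} Σ_{k ∈ {1,…,n-3}, k ∉ K_n} Δ_k · ((n-3)!/(n-3-k)!) · ℙ(Poisson(ω_n) ≥ 2k+1) = 0. -/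
open Filter Real Finset

/-- Tutte's count of planar triangulations with `k` internal vertices. -/
noncomputable def tutteDelta (k : ℕ) : ℝ :=
  6 * (Nat.factorial (4 * k + 1)) / (Nat.factorial k * Nat.factorial (3 * k + 3))

/-- The probability that a Poisson random variable with parameter `t` is at least `m`. -/
noncomputable def poissonTail (t : ℝ) (m : ℕ) : ℝ :=
  ∑' j : ℕ, if m ≤ j then Real.exp (-t) * t ^ j / (Nat.factorial j) else 0


lemma tutteDelta_nonneg (k : ℕ) : 0 ≤ tutteDelta k := by
  unfold tutteDelta; positivity

lemma tutteDelta_rec (k : ℕ) :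
    tutteDelta (k+1) * (((k:ℝ)+1)*(3*k+4)*(3*k+5)*(3*k+6))
      = tutteDelta k * ((4*k+2)*(4*k+3)*(4*k+4)*(4*k+5)) := by
  unfold tutteDelta
  have h1 : Nat.factorial (4*(k+1)+1) = (4*k+5)*((4*k+4)*((4*k+3)*((4*k+2)*Nat.factorial (4*k+1)))) := by
    have : 4*(k+1)+1 = (4*k+1)+1+1+1+1 := by ring
    rw [this]
    simp [Nat.factorial_succ]
  have h2 : Nat.factorial (k+1) = (k+1) * Nat.factorial k := Nat.factorial_succ k
  have h3 : Nat.factorial (3*(k+1)+3) = (3*k+6)*((3*k+5)*((3*k+4)*Nat.factorial (3*k+3))) := by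
    have : 3*(k+1)+3 = (3*k+3)+1+1+1 := by ring
    rw [this]
    simp [Nat.factorial_succ]
  rw [h1, h2, h3]
  push_cast
  have hk : (Nat.factorial k : ℝ) ≠ 0 := by positivity
  have h33 : (Nat.factorial (3*k+3) : ℝ) ≠ 0 := by positivity
  field_simp

lemma key_poly (k : ℕ) :
    729 * (((4*(k:ℝ)+2)*(4*k+3)*(4*k+4)*(4*k+5))^2 * ((k:ℝ)+2)^5)
      ≤ 65536 * ((((k:ℝ)+1)*(3*k+4)*(3*k+5)*(3*k+6))^2 * ((k:ℝ)+1)^5) := by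
  have hx : (0:ℝ) ≤ (k:ℝ) := Nat.cast_nonneg k
  nlinarith [pow_nonneg hx 2, pow_nonneg hx 3, pow_nonneg hx 4, pow_nonneg hx 5,
    pow_nonneg hx 6, pow_nonneg hx 7, pow_nonneg hx 8, pow_nonneg hx 9,
    pow_nonneg hx 10, pow_nonneg hx 11]


lemma aux_step (T0 T1 N D c1 c2 g : ℝ) (hD : 0 < D) (hrec : T1 * D = T0 * N)
    (hkey : 729 * (N^2 * c2) ≤ 65536 * (D^2 * c1)) (hIH : T0^2 * c1 ≤ g^2) :
    T1^2 * c2 ≤ (256/27 * g)^2 := by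
  have h729 : (0:ℝ) < 729 * D^2 := by positivity
  have h1 : T1^2 * c2 * (729 * D^2) = 729 * (T0^2 * (N^2 * c2)) := by
    linear_combination (729 * c2 * (T1*D + T0*N)) * hrec
  have h2 : 729 * (T0^2 * (N^2 * c2)) ≤ T0^2 * (65536*(D^2*c1)) := by
    have := mul_le_mul_of_nonneg_left hkey (sq_nonneg T0)
    linarith [this]
  have h3 : T0^2 * (65536*(D^2*c1)) ≤ (65536*D^2) * g^2 := by
    have := mul_le_mul_of_nonneg_left hIH (by positivity : (0:ℝ) ≤ 65536*D^2)
    linarith [this]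
  have h4 : T1^2 * c2 * (729 * D^2) ≤ ((256/27 * g)^2) * (729 * D^2) := by
    rw [h1]
    calc 729 * (T0^2 * (N^2 * c2)) ≤ (65536*D^2) * g^2 := le_trans h2 h3
      _ = ((256/27 * g)^2) * (729 * D^2) := by ring
  exact le_of_mul_le_mul_right h4 h729

lemma tutteDelta_sq_le (k : ℕ) :
    (tutteDelta k)^2 * ((k:ℝ)+1)^5 ≤ (((256:ℝ)/27)^k)^2 := by
  induction k with
  | zero =>
    have : tutteDelta 0 = 1 := by
      unfold tutteDelta; norm_num [Nat.factorial]
    rw [this]; norm_num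
  | succ k IH =>
    have hD : (0:ℝ) < ((k:ℝ)+1)*(3*k+4)*(3*k+5)*(3*k+6) := by positivity
    have h := aux_step (tutteDelta k) (tutteDelta (k+1))
      ((4*(k:ℝ)+2)*(4*k+3)*(4*k+4)*(4*k+5))
      (((k:ℝ)+1)*(3*k+4)*(3*k+5)*(3*k+6))
      (((k:ℝ)+1)^5) (((k:ℝ)+2)^5) (((256:ℝ)/27)^k)
      hD (tutteDelta_rec k) (key_poly k) IH
    calc (tutteDelta (k+1))^2 * ((((k+1):ℕ):ℝ)+1)^5
        = (tutteDelta (k+1))^2 * ((k:ℝ)+2)^5 := by push_cast; ring_nf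
      _ ≤ (256/27 * ((256:ℝ)/27)^k)^2 := h
      _ = (((256:ℝ)/27)^(k+1))^2 := by rw [pow_succ]; ring

lemma tutteDelta_le (k : ℕ) :
    tutteDelta k ≤ ((256:ℝ)/27)^k / Real.sqrt (((k:ℝ)+1)^5) := by
  have h5 : (0:ℝ) < ((k:ℝ)+1)^5 := by positivity
  have hs : (0:ℝ) < Real.sqrt (((k:ℝ)+1)^5) := Real.sqrt_pos.mpr h5
  rw [le_div_iff₀ hs]
  have h1 : 0 ≤ tutteDelta k * Real.sqrt (((k:ℝ)+1)^5) :=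
    mul_nonneg (tutteDelta_nonneg k) hs.le
  have hmul : (tutteDelta k * Real.sqrt (((k:ℝ)+1)^5))^2 ≤ ((((256:ℝ)/27)^k))^2 := by
    rw [mul_pow, Real.sq_sqrt h5.le]
    exact tutteDelta_sq_le k
  calc tutteDelta k * Real.sqrt (((k:ℝ)+1)^5)
      = Real.sqrt ((tutteDelta k * Real.sqrt (((k:ℝ)+1)^5))^2) := (Real.sqrt_sq h1).symm
    _ ≤ Real.sqrt (((((256:ℝ)/27)^k))^2) := Real.sqrt_le_sqrt hmul
    _ = ((256:ℝ)/27)^k := Real.sqrt_sq (by positivity)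


lemma exp_eq_tsum' (x : ℝ) : Real.exp x = ∑' n : ℕ, x ^ n / (Nat.factorial n) := by
  rw [Real.exp_eq_exp_ℝ, NormedSpace.exp_eq_tsum_div]

lemma poissonTail_nonneg {t : ℝ} (ht : 0 ≤ t) (m : ℕ) : 0 ≤ poissonTail t m := by
  apply tsum_nonneg
  intro j
  by_cases h : m ≤ j <;> simp [h] <;> positivity

lemma exp_pow_eq (s : ℝ) (hs0 : 0 < s) (m : ℕ) :
    Real.exp ((m:ℝ) * Real.log s) = s ^ m := by
  rw [Real.exp_nat_mul, Real.exp_log hs0]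

lemma poissonTail_le {t : ℝ} (ht : 0 ≤ t) (ht1 : t ≤ 1) (m : ℕ) :
    poissonTail t m ≤ 3 * (t ^ m / (Nat.factorial m)) := by
  have hsummR : Summable (fun i : ℕ => t ^ m / (Nat.factorial m) * (t ^ i / (Nat.factorial i))) :=
    (Real.summable_pow_div_factorial t).mul_left _
  have hterm : ∀ i : ℕ, Real.exp (-t) * t ^ (m+i) / (Nat.factorial (m+i))
      ≤ t ^ m / (Nat.factorial m) * (t ^ i / (Nat.factorial i)) := by
    intro i
    have hfac : (Nat.factorial m * Nat.factorial i : ℝ) ≤ (Nat.factorial (m+i) : ℝ) := by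
      exact_mod_cast Nat.le_of_dvd (Nat.factorial_pos _)
        (Nat.factorial_mul_factorial_dvd_factorial_add m i)
    have he : Real.exp (-t) ≤ 1 := Real.exp_le_one_iff.mpr (by linarith)
    have htp : (0:ℝ) ≤ t ^ (m+i) := pow_nonneg ht _
    have h1 : Real.exp (-t) * t ^ (m+i) / (Nat.factorial (m+i))
        ≤ t ^ (m+i) / (Nat.factorial (m+i)) := by
      apply div_le_div_of_nonneg_right ?_ (by positivity)
      nlinarith [Real.exp_pos (-t)]
    refine h1.trans ?_
    have h2 : t ^ (m+i) / (Nat.factorial (m+i))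
        ≤ t ^ (m+i) / ((Nat.factorial m : ℝ) * (Nat.factorial i)) :=
      div_le_div_of_nonneg_left htp (by positivity) hfac
    refine h2.trans_eq ?_
    rw [pow_add]
    field_simp
  have hsummL : Summable (fun i : ℕ => Real.exp (-t) * t ^ (m+i) / (Nat.factorial (m+i))) :=
    Summable.of_nonneg_of_le (fun i => by positivity) hterm hsummR
  have hinj : Function.Injective (fun i : ℕ => m + i) := fun x y h => by
    simpa using h
  have hsupp : Function.support
      (fun j : ℕ => if m ≤ j then Real.exp (-t) * t ^ j / (Nat.factorial j) else 0)
      ⊆ Set.range (fun i : ℕ => m + i) := by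
    intro j hj
    rcases le_or_gt m j with h | h
    · exact ⟨j - m, by simp; omega⟩
    · exfalso; apply hj; simp [not_le.mpr h]
  have hre : poissonTail t m = ∑' i : ℕ, Real.exp (-t) * t ^ (m+i) / (Nat.factorial (m+i)) := by
    unfold poissonTail
    rw [← hinj.tsum_eq hsupp]
    simp
  rw [hre]
  calc (∑' i : ℕ, Real.exp (-t) * t ^ (m+i) / (Nat.factorial (m+i)))
      ≤ ∑' i : ℕ, t ^ m / (Nat.factorial m) * (t ^ i / (Nat.factorial i)) :=
        Summable.tsum_le_tsum hterm hsummL hsummR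
    _ = t ^ m / (Nat.factorial m) * Real.exp t := by
        rw [tsum_mul_left, exp_eq_tsum' t]
    _ ≤ t ^ m / (Nat.factorial m) * 3 := by
        apply mul_le_mul_of_nonneg_left ?_ (by positivity)
        calc Real.exp t ≤ Real.exp 1 := Real.exp_le_exp.mpr ht1
          _ ≤ 3 := by linarith [Real.exp_one_lt_d9]
    _ = 3 * (t ^ m / (Nat.factorial m)) := by ring

lemma sum_odd_pow_div_factorial_le (u : ℝ) (hu : 0 ≤ u) (F : Finset ℕ) :
    ∑ k ∈ F, u^(2*k+1) / (Nat.factorial (2*k+1)) ≤ Real.exp u := by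
  have hinj : ∀ x ∈ F, ∀ y ∈ F, 2*x+1 = 2*y+1 → x = y := fun x _ y _ h => by omega
  have him : ∑ k ∈ F, u^(2*k+1) / (Nat.factorial (2*k+1))
      = ∑ j ∈ F.image (fun k => 2*k+1), u^j / (Nat.factorial j) :=
    (Finset.sum_image (f := fun j : ℕ => u^j / (Nat.factorial j : ℝ)) (g := fun k : ℕ => 2*k+1) hinj).symm
  rw [him, exp_eq_tsum' u]
  exact Summable.sum_le_tsum _ (fun i _ => by positivity) (Real.summable_pow_div_factorial u)

lemma tilt_upper (lam s M : ℝ) (hlam : 0 ≤ lam) (hs : 1 ≤ s) (F : Finset ℕ)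
    (hF : ∀ k ∈ F, M ≤ 2*(k:ℝ)+1) :
    ∑ k ∈ F, lam^(2*k+1) / (Nat.factorial (2*k+1))
      ≤ Real.exp (-(M * Real.log s)) * Real.exp (s * lam) := by
  have hs0 : (0:ℝ) < s := by linarith
  have hls : 0 ≤ Real.log s := Real.log_nonneg hs
  calc ∑ k ∈ F, lam^(2*k+1) / (Nat.factorial (2*k+1))
      ≤ ∑ k ∈ F, Real.exp (-(M * Real.log s)) * ((s*lam)^(2*k+1) / (Nat.factorial (2*k+1))) := by
        apply Finset.sum_le_sum
        intro k hk
        have hm : M ≤ 2*(k:ℝ)+1 := hF k hk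
        have hsm : Real.exp (((2*k+1 : ℕ):ℝ) * Real.log s) = s ^ (2*k+1) :=
          exp_pow_eq s hs0 (2*k+1)
        have h1 : (1:ℝ) ≤ Real.exp (-(M * Real.log s)) * s^(2*k+1) := by
          rw [← hsm, ← Real.exp_add]
          apply Real.one_le_exp
          push_cast
          nlinarith [hls, hm]
        calc lam^(2*k+1) / (Nat.factorial (2*k+1))
            = 1 * (lam^(2*k+1) / (Nat.factorial (2*k+1))) := (one_mul _).symm
          _ ≤ (Real.exp (-(M * Real.log s)) * s^(2*k+1)) * (lam^(2*k+1) / (Nat.factorial (2*k+1))) :=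
              mul_le_mul_of_nonneg_right h1 (by positivity)
          _ = Real.exp (-(M * Real.log s)) * ((s*lam)^(2*k+1) / (Nat.factorial (2*k+1))) := by
              rw [mul_pow]; ring
    _ = Real.exp (-(M * Real.log s)) * ∑ k ∈ F, ((s*lam)^(2*k+1) / (Nat.factorial (2*k+1))) := by
        rw [Finset.mul_sum]
    _ ≤ Real.exp (-(M * Real.log s)) * Real.exp (s * lam) := by
        apply mul_le_mul_of_nonneg_left ?_ (Real.exp_nonneg _)
        exact sum_odd_pow_div_factorial_le (s*lam) (by positivity) F

lemma tilt_lower (lam s M : ℝ) (hlam : 0 ≤ lam) (hs : 1 ≤ s) (F : Finset ℕ)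
    (hF : ∀ k ∈ F, 2*(k:ℝ)+1 ≤ M) :
    ∑ k ∈ F, lam^(2*k+1) / (Nat.factorial (2*k+1))
      ≤ Real.exp (M * Real.log s) * Real.exp (lam / s) := by
  have hs0 : (0:ℝ) < s := by linarith
  have hls : 0 ≤ Real.log s := Real.log_nonneg hs
  calc ∑ k ∈ F, lam^(2*k+1) / (Nat.factorial (2*k+1))
      ≤ ∑ k ∈ F, Real.exp (M * Real.log s) * ((lam/s)^(2*k+1) / (Nat.factorial (2*k+1))) := by
        apply Finset.sum_le_sum
        intro k hk
        have hm : 2*(k:ℝ)+1 ≤ M := hF k hk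
        have hsm : Real.exp (((2*k+1 : ℕ):ℝ) * Real.log s) = s ^ (2*k+1) :=
          exp_pow_eq s hs0 (2*k+1)
        have h1 : s^(2*k+1) * ((lam/s)^(2*k+1) / (Nat.factorial (2*k+1)))
            = lam^(2*k+1) / (Nat.factorial (2*k+1)) := by
          rw [div_pow]
          field_simp
        have h2 : (1:ℝ) ≤ Real.exp (M * Real.log s) / s^(2*k+1) := by
          rw [← hsm, ← Real.exp_sub]
          apply Real.one_le_exp
          push_cast
          nlinarith [hls, hm]
        calc lam^(2*k+1) / (Nat.factorial (2*k+1))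
            = 1 * (s^(2*k+1) * ((lam/s)^(2*k+1) / (Nat.factorial (2*k+1)))) := by rw [h1, one_mul]
          _ ≤ (Real.exp (M * Real.log s) / s^(2*k+1)) * (s^(2*k+1) * ((lam/s)^(2*k+1) / (Nat.factorial (2*k+1)))) := by
              apply mul_le_mul_of_nonneg_right h2
              positivity
          _ = Real.exp (M * Real.log s) * ((lam/s)^(2*k+1) / (Nat.factorial (2*k+1))) := by
              field_simp
    _ = Real.exp (M * Real.log s) * ∑ k ∈ F, ((lam/s)^(2*k+1) / (Nat.factorial (2*k+1))) := by
        rw [Finset.mul_sum]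
    _ ≤ Real.exp (M * Real.log s) * Real.exp (lam / s) := by
        apply mul_le_mul_of_nonneg_left ?_ (Real.exp_nonneg _)
        exact sum_odd_pow_div_factorial_le (lam/s) (by positivity) F


lemma master_term (n k : ℕ) (γ lamn : ℝ) (hγ : γ = 256/27) (hk : k ≤ n - 3) (hn : 4 ≤ n)
    (hlam0 : 0 ≤ lamn) (hω1 : lamn / Real.sqrt (γ * n) ≤ 1) :
    tutteDelta k * ((Nat.factorial (n-3) : ℝ) / (Nat.factorial (n-3-k)))
        * poissonTail (lamn / Real.sqrt (γ * n)) (2*k+1)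
      ≤ 3 / (Real.sqrt (γ*n) * Real.sqrt (((k:ℝ)+1)^5))
        * (lamn^(2*k+1) / (Nat.factorial (2*k+1))) := by
  have hγ0 : (0:ℝ) < γ := by rw [hγ]; norm_num
  have hn0 : (0:ℝ) < n := by positivity
  have hγn : (0:ℝ) < γ * n := by positivity
  have hS : (0:ℝ) < Real.sqrt (γ * n) := Real.sqrt_pos.mpr hγn
  set ω : ℝ := lamn / Real.sqrt (γ * n) with hωdef
  have hω0 : 0 ≤ ω := div_nonneg hlam0 hS.le
  have hs5 : (0:ℝ) < Real.sqrt (((k:ℝ)+1)^5) := Real.sqrt_pos.mpr (by positivity)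
  -- falling factorial bound
  have d2 : ((Nat.factorial (n-3) : ℝ) / (Nat.factorial (n-3-k))) ≤ (n:ℝ)^k := by
    have hfd : (Nat.factorial (n-3-k)) * (Nat.descFactorial (n-3) k) = Nat.factorial (n-3) :=
      Nat.factorial_mul_descFactorial hk
    have hpos : (0:ℝ) < (Nat.factorial (n-3-k) : ℝ) := by positivity
    have heq : ((Nat.factorial (n-3) : ℝ) / (Nat.factorial (n-3-k)))
        = (Nat.descFactorial (n-3) k : ℝ) := by
      rw [div_eq_iff hpos.ne']
      rw [mul_comm]
      exact_mod_cast (congrArg (fun x : ℕ => (x : ℝ)) hfd).symm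
    rw [heq]
    calc (Nat.descFactorial (n-3) k : ℝ) ≤ ((n-3:ℕ):ℝ)^k := by
          exact_mod_cast Nat.descFactorial_le_pow (n-3) k
      _ ≤ (n:ℝ)^k := by
          apply pow_le_pow_left₀ (by positivity)
          exact_mod_cast Nat.sub_le n 3
  have d1 : tutteDelta k ≤ γ^k / Real.sqrt (((k:ℝ)+1)^5) := by
    rw [hγ]; exact tutteDelta_le k
  have d3 : poissonTail ω (2*k+1) ≤ 3 * (ω^(2*k+1) / (Nat.factorial (2*k+1))) :=
    poissonTail_le hω0 hω1 (2*k+1)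
  have hFFnn : 0 ≤ ((Nat.factorial (n-3) : ℝ) / (Nat.factorial (n-3-k))) := by positivity
  have step : tutteDelta k * ((Nat.factorial (n-3) : ℝ) / (Nat.factorial (n-3-k)))
      * poissonTail ω (2*k+1)
      ≤ (γ^k / Real.sqrt (((k:ℝ)+1)^5)) * (n:ℝ)^k * (3 * (ω^(2*k+1) / (Nat.factorial (2*k+1)))) := by
    apply mul_le_mul
    · apply mul_le_mul d1 d2 hFFnn (by positivity)
    · exact d3
    · exact poissonTail_nonneg hω0 _
    · positivity
  refine step.trans_eq ?_
  have hsq : Real.sqrt (γ*n) ^ 2 = γ * n := Real.sq_sqrt hγn.le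
  have hp : (Real.sqrt (γ*n))^(2*k+1) = (γ*n)^k * Real.sqrt (γ*n) := by
    rw [pow_succ, pow_mul, hsq]
  have hω : ω^(2*k+1) = lamn^(2*k+1) / ((γ*n)^k * Real.sqrt (γ*n)) := by
    rw [hωdef, div_pow, hp]
  rw [hω]
  have h1 : ((γ*n):ℝ)^k = γ^k * (n:ℝ)^k := mul_pow γ (n:ℝ) k
  field_simp
  ring


lemma prefactor (x A : ℝ) (hx : 1 < x) :
    1 / Real.sqrt x = Real.sqrt ((Real.log x)^5) * Real.exp A
      * Real.exp (-((1/2)*Real.log x + (5/2)*Real.log (Real.log x) + A)) := by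
  have hx0 : (0:ℝ) < x := by linarith
  have hL : 0 < Real.log x := Real.log_pos hx
  have h1 : Real.exp ((1/2)*Real.log x) = Real.sqrt x := by
    rw [show (1/2)*Real.log x = Real.log x / 2 by ring, Real.exp_half, Real.exp_log hx0]
  have h2 : Real.exp ((5/2)*Real.log (Real.log x)) = Real.sqrt ((Real.log x)^5) := by
    rw [show (5/2)*Real.log (Real.log x) = (5*Real.log (Real.log x)) / 2 by ring,
      Real.exp_half]
    congr 1
    rw [show (5:ℝ)*Real.log (Real.log x) = ((5:ℕ):ℝ)*Real.log (Real.log x) by norm_num,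
      Real.exp_nat_mul, Real.exp_log hL]
  have hexp : Real.exp ((1/2)*Real.log x + (5/2)*Real.log (Real.log x) + A)
      = Real.sqrt x * Real.sqrt ((Real.log x)^5) * Real.exp A := by
    rw [Real.exp_add, Real.exp_add, h1, h2]
  rw [Real.exp_neg, hexp]
  have hsx : (0:ℝ) < Real.sqrt x := Real.sqrt_pos.mpr hx0
  have hsL : (0:ℝ) < Real.sqrt ((Real.log x)^5) := Real.sqrt_pos.mpr (by positivity)
  field_simp

lemma tendsto_exp_neg_sq_zero (a : ℕ → ℝ) (ha : Tendsto a atTop atTop) :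
    Tendsto (fun n => Real.exp (-(a n)^2/4)) atTop (nhds 0) := by
  apply Real.tendsto_exp_atBot.comp
  have hsq : Tendsto (fun n => (a n)^2) atTop atTop := by
    have := ha.atTop_mul_atTop₀ ha
    simpa [pow_two] using this
  have h2 : Tendsto (fun n => (a n)^2/4) atTop atTop := hsq.atTop_div_const (by norm_num)
  have h3 : Tendsto (fun n => -((a n)^2/4)) atTop atBot := tendsto_neg_atBot_iff.mpr h2
  simpa [neg_div] using h3

lemma tendsto_exp_neg_log_zero (c : ℝ) (hc : 0 < c) :
    Tendsto (fun n : ℕ => Real.exp (-(Real.log n / c))) atTop (nhds 0) := by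
  apply Real.tendsto_exp_atBot.comp
  have h1 : Tendsto (fun n : ℕ => Real.log n) atTop atTop :=
    Real.tendsto_log_atTop.comp tendsto_natCast_atTop_atTop
  have h2 : Tendsto (fun n : ℕ => Real.log n / c) atTop atTop :=
    h1.atTop_div_const hc
  exact tendsto_neg_atBot_iff.mpr h2

set_option maxHeartbeats 1000000 in
open scoped Classical in
theorem first_moment_outside_window (A γ : ℝ) (hγ : γ = 256 / 27)
    (lam ω : ℕ → ℝ)
    (hlam : ∀ n : ℕ, lam n = (1 / 2) * Real.log n + (5 / 2) * Real.log (Real.log n) + A)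
    (hω : ∀ n : ℕ, ω n = lam n / Real.sqrt (γ * n))
    (a : ℕ → ℝ) (ha : Tendsto a atTop atTop)
    (ha' : Tendsto (fun n : ℕ => a n / Real.sqrt (Real.log n)) atTop (nhds 0)) :
    Tendsto
      (fun n : ℕ => ∑ k ∈ (Finset.Icc 1 (n - 3)).filter
          (fun k : ℕ => (k : ℝ) ∉
            Set.Icc ((1 / 4) * Real.log n - a n * Real.sqrt (Real.log n))
              ((1 / 4) * Real.log n + a n * Real.sqrt (Real.log n))),
        tutteDelta k * ((Nat.factorial (n - 3) : ℝ) / (Nat.factorial (n - 3 - k))) *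
          poissonTail (ω n) (2 * k + 1))
      atTop (nhds 0) := by
  have hlogtend : Tendsto (fun n : ℕ => Real.log n) atTop atTop :=
    Real.tendsto_log_atTop.comp tendsto_natCast_atTop_atTop
  have hloglog : Tendsto (fun n : ℕ => Real.log (Real.log n)) atTop atTop :=
    Real.tendsto_log_atTop.comp hlogtend
  set B : ℕ → ℝ := fun n =>
    Real.sqrt ((Real.log n)^5) * Real.exp A
        * Real.exp ((Real.log n/4 + 1) * Real.log 2 - lam n/2)
      + 214 * Real.exp A * Real.exp (-(a n)^2/4) with hBdef
  -- eventual facts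
  have e1 : ∀ᶠ n : ℕ in atTop, 4 ≤ n := eventually_ge_atTop 4
  have e7 : ∀ᶠ n : ℕ in atTop, (16:ℝ) ≤ (n:ℝ) := by
    filter_upwards [eventually_ge_atTop 16] with n hn
    exact_mod_cast hn
  have eL : ∀ᶠ n : ℕ in atTop, 40000 ≤ Real.log n := hlogtend.eventually_ge_atTop _
  have eA2 : ∀ᶠ n : ℕ in atTop, A^2 ≤ Real.log n := hlogtend.eventually_ge_atTop _
  have e52 : ∀ᶠ n : ℕ in atTop, 1 ≤ (5/2) * Real.log (Real.log n) + A := by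
    have : Tendsto (fun n : ℕ => (5/2) * Real.log (Real.log n) + A) atTop atTop := by
      apply tendsto_atTop_add_const_right
      exact hloglog.const_mul_atTop (by norm_num)
    exact this.eventually_ge_atTop 1
  have e6 : ∀ᶠ n : ℕ in atTop, 6 ≤ a n := ha.eventually_ge_atTop 6
  have e8 : ∀ᶠ n : ℕ in atTop, a n / Real.sqrt (Real.log n) ≤ 1/8 := by
    have := ha'.eventually (eventually_lt_nhds (show (0:ℝ) < 1/8 by norm_num))
    filter_upwards [this] with n hn
    exact le_of_lt hn
  -- nonnegativity of the sum
  have hSnn : ∀ᶠ n : ℕ in atTop, 0 ≤ ∑ k ∈ (Finset.Icc 1 (n - 3)).filter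
      (fun k : ℕ => (k : ℝ) ∉
        Set.Icc ((1 / 4) * Real.log n - a n * Real.sqrt (Real.log n))
          ((1 / 4) * Real.log n + a n * Real.sqrt (Real.log n))),
      tutteDelta k * ((Nat.factorial (n - 3) : ℝ) / (Nat.factorial (n - 3 - k))) *
        poissonTail (ω n) (2 * k + 1) := by
    filter_upwards [eL, e52] with n hL h52
    have hω0 : 0 ≤ ω n := by
      rw [hω n, hlam n]
      apply div_nonneg ?_ (Real.sqrt_nonneg _)
      nlinarith [hL, h52]
    apply Finset.sum_nonneg
    intro k _
    have h1 := tutteDelta_nonneg k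
    have h2 : (0:ℝ) ≤ (Nat.factorial (n - 3) : ℝ) / (Nat.factorial (n - 3 - k)) := by positivity
    have h3 := poissonTail_nonneg hω0 (2*k+1)
    positivity
  -- B tends to zero
  have hBtend : Tendsto B atTop (nhds 0) := by
    rw [hBdef]
    have part2 : Tendsto (fun n : ℕ => 214 * Real.exp A * Real.exp (-(a n)^2/4)) atTop (nhds 0) := by
      have := (tendsto_exp_neg_sq_zero a ha).const_mul (214 * Real.exp A)
      simpa using this
    have part1 : Tendsto (fun n : ℕ => Real.sqrt ((Real.log n)^5) * Real.exp A
        * Real.exp ((Real.log n/4 + 1) * Real.log 2 - lam n/2)) atTop (nhds 0) := by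
      apply squeeze_zero' (by filter_upwards with n; positivity)
        (g := fun n : ℕ => Real.exp A * Real.exp (-(Real.log n / 20)))
      · filter_upwards [eL, eventually_ge_atTop 2, hlogtend.eventually_ge_atTop (80*(Real.log 2 - A/2))]
          with n hL hn2 hcA
        have hL0 : (0:ℝ) < Real.log n := by linarith
        set Ln := Real.log (n:ℝ) with hLn
        have hQ2 : Real.sqrt Ln ^ 2 = Ln := Real.sq_sqrt hL0.le
        have hQ200 : 200 ≤ Real.sqrt Ln := by
          have h1 : Real.sqrt 40000 ≤ Real.sqrt Ln := Real.sqrt_le_sqrt hL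
          rwa [show (40000:ℝ) = 200^2 by norm_num, Real.sqrt_sq (by norm_num)] at h1
        have hQ0 : 0 < Real.sqrt Ln := by linarith
        have hlogL : Real.log Ln ≤ 2 * Real.sqrt Ln := by
          have h1 : Real.log (Real.sqrt Ln) ≤ Real.sqrt Ln - 1 := Real.log_le_sub_one_of_pos hQ0
          have h2 : Real.log (Real.sqrt Ln) = Real.log Ln / 2 := Real.log_sqrt hL0.le
          linarith
        have hQLn : Real.sqrt Ln ≤ Ln / 200 := by nlinarith
        have hsqrt5 : Real.sqrt (Ln^5) ≤ Real.exp ((5/2) * Real.log Ln) := by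
          have h1 : Ln^5 = Real.exp (5 * Real.log Ln) := by
            rw [show (5:ℝ) * Real.log Ln = ((5:ℕ):ℝ) * Real.log Ln by norm_num,
              Real.exp_nat_mul, Real.exp_log hL0]
          rw [h1, ← Real.exp_half]
          apply le_of_eq
          congr 1
          ring
        have hlog2 : Real.log 2 ≤ 0.7 := by
          have := Real.log_two_lt_d9
          linarith
        have hlog2' : 0 < Real.log 2 := Real.log_pos (by norm_num)
        calc Real.sqrt (Ln^5) * Real.exp A * Real.exp ((Ln/4 + 1) * Real.log 2 - lam n/2)
            ≤ Real.exp ((5/2) * Real.log Ln) * Real.exp A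
              * Real.exp ((Ln/4 + 1) * Real.log 2 - lam n/2) := by
              apply mul_le_mul_of_nonneg_right ?_ (Real.exp_nonneg _)
              exact mul_le_mul_of_nonneg_right hsqrt5 (Real.exp_nonneg _)
          _ = Real.exp A * Real.exp ((5/2) * Real.log Ln + (Ln/4 + 1) * Real.log 2 - lam n/2) := by
              rw [← Real.exp_add, ← Real.exp_add, ← Real.exp_add]; congr 1; ring
          _ ≤ Real.exp A * Real.exp (-(Ln / 20)) := by
              apply mul_le_mul_of_nonneg_left ?_ (Real.exp_nonneg _)
              apply Real.exp_le_exp.mpr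
              rw [hlam n, ← hLn]
              nlinarith [hlogL, hQLn, hcA, hL0]
      · have := (tendsto_exp_neg_log_zero 20 (by norm_num)).const_mul (Real.exp A)
        simpa using this
    have := part1.add part2
    simpa using this
  -- the eventual comparison
  have hSB : ∀ᶠ n : ℕ in atTop, (∑ k ∈ (Finset.Icc 1 (n - 3)).filter
      (fun k : ℕ => (k : ℝ) ∉
        Set.Icc ((1 / 4) * Real.log n - a n * Real.sqrt (Real.log n))
          ((1 / 4) * Real.log n + a n * Real.sqrt (Real.log n))),
      tutteDelta k * ((Nat.factorial (n - 3) : ℝ) / (Nat.factorial (n - 3 - k))) *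
        poissonTail (ω n) (2 * k + 1)) ≤ B n := by
    filter_upwards [e1, e7, eL, eA2, e52, e6, e8] with n hn4 hn16 hL40 hA2 h52 ha6 ha8
    have hn1 : (1:ℝ) < (n:ℝ) := by
      have : (4:ℝ) ≤ (n:ℝ) := by exact_mod_cast hn4
      linarith
    have hn0 : (0:ℝ) < (n:ℝ) := by linarith
    set Ln := Real.log (n:ℝ) with hLndef
    have hL0 : (0:ℝ) < Ln := by linarith
    set Q := Real.sqrt Ln with hQdef
    have hQ2 : Q^2 = Ln := Real.sq_sqrt hL0.le
    have hQ200 : 200 ≤ Q := by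
      have h1 : Real.sqrt 40000 ≤ Q := Real.sqrt_le_sqrt hL40
      rwa [show (40000:ℝ) = 200^2 by norm_num, Real.sqrt_sq (by norm_num)] at h1
    have hQ0 : (0:ℝ) < Q := by linarith
    have haQ8 : a n ≤ Q/8 := by
      have h1 := (div_le_iff₀ hQ0).mp ha8
      linarith
    have ha0 : (0:ℝ) < a n := by linarith
    have hlogL2Q : Real.log Ln ≤ 2*Q := by
      have h1 : Real.log Q ≤ Q - 1 := Real.log_le_sub_one_of_pos hQ0
      have h2 : Real.log Q = Real.log Ln / 2 := Real.log_sqrt hL0.le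
      linarith
    have hAQ : A ≤ Q := by
      calc A ≤ |A| := le_abs_self A
        _ = Real.sqrt (A^2) := (Real.sqrt_sq_eq_abs A).symm
        _ ≤ Q := Real.sqrt_le_sqrt hA2
    have hlamn := hlam n
    rw [← hLndef] at hlamn
    have hlam_low : Ln/2 + 1 ≤ lam n := by rw [hlamn]; linarith
    have hlam0 : 0 ≤ lam n := by linarith
    have hQQ : Q*Q = Ln := by rw [← hQ2]; ring
    have h200Q : 200*Q ≤ Q*Q := mul_le_mul_of_nonneg_right hQ200 hQ0.le
    have hlam_up : lam n ≤ (5/8)*Ln := by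
      rw [hlamn]
      linarith [hlogL2Q, hAQ, hQ0, hQQ, h200Q]
    have hlamLn : lam n ≤ Ln := by linarith
    have haQL : a n * Q ≤ Ln/8 := by
      have h1 : a n * Q ≤ Q/8 * Q := mul_le_mul_of_nonneg_right haQ8 hQ0.le
      have h2 : Q/8*Q = Ln/8 := by rw [← hQQ]; ring
      linarith
    have haQ0 : (0:ℝ) < a n * Q := by positivity
    -- ω
    have hγ0 : (0:ℝ) < γ := by rw [hγ]; norm_num
    have hγn0 : (0:ℝ) < γ * n := by positivity
    have hSg0 : (0:ℝ) < Real.sqrt (γ * n) := Real.sqrt_pos.mpr hγn0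
    have hω0 : 0 ≤ ω n := by rw [hω n]; exact div_nonneg hlam0 hSg0.le
    have hsγ : 3 ≤ Real.sqrt γ := by
      rw [hγ]
      have h1 : Real.sqrt 9 ≤ Real.sqrt (256/27) := Real.sqrt_le_sqrt (by norm_num)
      rwa [show (9:ℝ) = 3^2 by norm_num, Real.sqrt_sq (by norm_num)] at h1
    have hSgsplit : Real.sqrt (γ * n) = Real.sqrt γ * Real.sqrt n :=
      Real.sqrt_mul hγ0.le _
    have hω1 : ω n ≤ 1 := by
      rw [hω n, div_le_one hSg0]
      set R := Real.sqrt (Real.sqrt n) with hRdef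
      have hsn0 : (0:ℝ) ≤ Real.sqrt n := Real.sqrt_nonneg _
      have hR2 : R^2 = Real.sqrt n := Real.sq_sqrt hsn0
      have h4sn : (4:ℝ) ≤ Real.sqrt n := by
        have h1 : Real.sqrt 16 ≤ Real.sqrt n := Real.sqrt_le_sqrt hn16
        rwa [show (16:ℝ) = 4^2 by norm_num, Real.sqrt_sq (by norm_num)] at h1
      have hR2' : (2:ℝ) ≤ R := by
        have h1 : Real.sqrt 4 ≤ R := Real.sqrt_le_sqrt h4sn
        rwa [show (4:ℝ) = 2^2 by norm_num, Real.sqrt_sq (by norm_num)] at h1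
      have hR0 : (0:ℝ) < R := by linarith
      have hlogR : Real.log R = Ln/4 := by
        rw [hRdef, Real.log_sqrt hsn0, Real.log_sqrt hn0.le]
        rw [hLndef]; ring
      have hLn4R : Ln ≤ 4*R := by
        have h1 := Real.log_le_sub_one_of_pos hR0
        rw [hlogR] at h1; linarith
      rw [hSgsplit, ← hR2]
      have c1 : 4*R ≤ 3*R^2 := by nlinarith [hR2']
      have c2 : 3*R^2 ≤ Real.sqrt γ * R^2 := by nlinarith [hsγ, sq_nonneg R]
      linarith [hlam_up, hLn4R, hL0]
    -- δ and s
    set d := a n / (2*Q) with hddef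
    have hd0 : (0:ℝ) < d := by positivity
    have hd16 : d ≤ 1/16 := by
      rw [hddef, div_le_iff₀ (by positivity)]
      linarith
    set s := 1 + d with hsdef
    have hs1 : (1:ℝ) ≤ s := by rw [hsdef]; linarith
    have hs0 : (0:ℝ) < s := by linarith
    have hlogs_le : Real.log s ≤ d := by
      have := Real.log_le_sub_one_of_pos hs0
      rw [hsdef] at this ⊢; linarith
    have hinv : 1/s ≤ 1 - d + d^2 := by
      rw [div_le_iff₀ hs0, hsdef]; nlinarith [pow_nonneg hd0.le 3, hd0]
    have hlogs_ge : d - d^2 ≤ Real.log s := by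
      have h1 : Real.log s⁻¹ ≤ s⁻¹ - 1 := Real.log_le_sub_one_of_pos (by positivity)
      rw [Real.log_inv] at h1
      have h2 : 1 - 1/s ≤ Real.log s := by
        rw [one_div]; linarith
      have h3 : 1 - 1/s ≥ d - d^2 := by linarith
      linarith
    have hdsq : d^2 = (a n)^2/(4*Ln) := by
      rw [hddef, div_pow, mul_pow, hQ2]; norm_num
    -- region sets
    set F0 := Finset.Icc 1 (n-3) with hF0def
    set F1 := F0.filter (fun k : ℕ => (k:ℝ) ≤ Ln/8) with hF1def
    set F2 := F0.filter (fun k : ℕ => Ln/8 < (k:ℝ) ∧ (k:ℝ) < (1/4)*Ln - a n * Q) with hF2def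
    set F3 := F0.filter (fun k : ℕ => (1/4)*Ln + a n * Q < (k:ℝ)) with hF3def
    set T : ℕ → ℝ := fun k => tutteDelta k
        * ((Nat.factorial (n - 3) : ℝ) / (Nat.factorial (n - 3 - k)))
        * poissonTail (ω n) (2 * k + 1) with hTdef
    set g : ℕ → ℝ := fun k => (lam n)^(2*k+1) / (Nat.factorial (2*k+1)) with hgdef
    have hTnn : ∀ k : ℕ, 0 ≤ T k := by
      intro k
      have h1 := tutteDelta_nonneg k
      have h2 : (0:ℝ) ≤ (Nat.factorial (n - 3) : ℝ) / (Nat.factorial (n - 3 - k)) := by positivity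
      have h3 := poissonTail_nonneg hω0 (2*k+1)
      rw [hTdef]
      positivity
    have hgnn : ∀ k : ℕ, 0 ≤ g k := by
      intro k; rw [hgdef]; positivity
    have hmaster : ∀ k ∈ F0, T k
        ≤ 3 / (Real.sqrt (γ*n) * Real.sqrt (((k:ℝ)+1)^5)) * g k := by
      intro k hk
      have hk3 : k ≤ n - 3 := (Finset.mem_Icc.mp hk).2
      have h := master_term n k γ (lam n) hγ hk3 hn4 hlam0 (by rw [← hω n]; exact hω1)
      rw [hTdef, hgdef, hω n]
      exact h
    -- inclusion and disjointness
    have hsub : (F0.filter (fun k : ℕ => (k : ℝ) ∉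
        Set.Icc ((1 / 4) * Ln - a n * Q) ((1 / 4) * Ln + a n * Q)))
        ⊆ (F1 ∪ F2) ∪ F3 := by
      intro k hk
      rcases Finset.mem_filter.mp hk with ⟨hk0, hkP⟩
      rw [Set.mem_Icc] at hkP
      push_neg at hkP
      simp only [Finset.mem_union, hF1def, hF2def, hF3def, Finset.mem_filter]
      rcases le_or_gt ((k:ℝ)) (Ln/8) with h8 | h8
      · exact Or.inl (Or.inl ⟨hk0, h8⟩)
      · rcases lt_or_ge ((k:ℝ)) ((1/4)*Ln - a n * Q) with hw | hw
        · exact Or.inl (Or.inr ⟨hk0, h8, hw⟩)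
        · exact Or.inr ⟨hk0, hkP hw⟩
    have hd12 : Disjoint F1 F2 := by
      rw [Finset.disjoint_left]
      intro k hk1 hk2
      have h1 := (Finset.mem_filter.mp hk1).2
      have h2 := (Finset.mem_filter.mp hk2).2.1
      linarith
    have hd123 : Disjoint (F1 ∪ F2) F3 := by
      rw [Finset.disjoint_left]
      intro k hk12 hk3
      have h3 := (Finset.mem_filter.mp hk3).2
      rcases Finset.mem_union.mp hk12 with hk1 | hk2
      · have h1 := (Finset.mem_filter.mp hk1).2
        linarith
      · have h2 := (Finset.mem_filter.mp hk2).2.2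
        linarith
    -- cutoffs
    have hcut1 : ∀ k ∈ F1, 2*(k:ℝ)+1 ≤ Ln/4 + 1 := by
      intro k hk
      have h1 := (Finset.mem_filter.mp hk).2
      linarith
    have hcut2 : ∀ k ∈ F2, 2*(k:ℝ)+1 ≤ lam n - a n * Q := by
      intro k hk
      have h1 := (Finset.mem_filter.mp hk).2.2
      linarith
    have hcut3 : ∀ k ∈ F3, lam n + a n * Q ≤ 2*(k:ℝ)+1 := by
      intro k hk
      have h1 := (Finset.mem_filter.mp hk).2
      have h2 : (5/2) * Real.log Ln + A ≤ a n * Q + 1 := by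
        have h6Q : 6*Q ≤ a n * Q := mul_le_mul_of_nonneg_right ha6 hQ0.le
        linarith [hlogL2Q, hAQ, hQ0]
      rw [hlamn] at *
      linarith
    -- region sums to tilted bounds
    have hL5 : (0:ℝ) < Real.sqrt (Ln^5) := Real.sqrt_pos.mpr (by positivity)
    have hb1 : ∑ k ∈ F1, T k
        ≤ 3 / Real.sqrt (γ*n) * (Real.exp ((Ln/4+1) * Real.log 2) * Real.exp (lam n / 2)) := by
      calc ∑ k ∈ F1, T k ≤ ∑ k ∈ F1, 3 / Real.sqrt (γ*n) * g k := by
            apply Finset.sum_le_sum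
            intro k hk
            have hkF0 : k ∈ F0 := Finset.mem_of_mem_filter k hk
            refine (hmaster k hkF0).trans ?_
            apply mul_le_mul_of_nonneg_right ?_ (hgnn k)
            have h15 : (1:ℝ) ≤ Real.sqrt (((k:ℝ)+1)^5) := by
              have hk1 : (1:ℝ) ≤ ((k:ℝ)+1)^5 := by
                calc (1:ℝ) = 1^5 := by norm_num
                  _ ≤ ((k:ℝ)+1)^5 := pow_le_pow_left₀ (by norm_num : (0:ℝ) ≤ 1) (by linarith [(Nat.cast_nonneg k : (0:ℝ) ≤ k)] : (1:ℝ) ≤ (k:ℝ)+1) 5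
              have h2 := Real.sqrt_le_sqrt hk1
              rwa [Real.sqrt_one] at h2
            rw [div_le_div_iff₀ (by positivity) hSg0]
            have h16 := mul_le_mul_of_nonneg_left h15 hSg0.le
            rw [mul_one] at h16
            linarith
        _ = 3 / Real.sqrt (γ*n) * ∑ k ∈ F1, g k := by rw [Finset.mul_sum]
        _ ≤ 3 / Real.sqrt (γ*n) * (Real.exp ((Ln/4+1) * Real.log 2) * Real.exp (lam n / 2)) := by
            apply mul_le_mul_of_nonneg_left ?_ (by positivity)
            have := tilt_lower (lam n) 2 (Ln/4+1) hlam0 (by norm_num) F1 hcut1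
            simpa [hgdef] using this
    -- generic coefficient comparison
    have hcoef : ∀ (k : ℕ) (c : ℝ), 0 < c → Real.sqrt (Ln^5) ≤ c * Real.sqrt (((k:ℝ)+1)^5) →
        3 / (Real.sqrt (γ*n) * Real.sqrt (((k:ℝ)+1)^5))
          ≤ (3*c) / (Real.sqrt (γ*n) * Real.sqrt (Ln^5)) := by
      intro k c hc hle
      have h5 : (0:ℝ) < Real.sqrt (((k:ℝ)+1)^5) := Real.sqrt_pos.mpr (by positivity)
      rw [div_le_div_iff₀ (by positivity) (by positivity)]
      have h1 : 3 * Real.sqrt (Ln^5) ≤ 3 * (c * Real.sqrt (((k:ℝ)+1)^5)) :=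
        mul_le_mul_of_nonneg_left hle (by norm_num)
      have h2 := mul_le_mul_of_nonneg_left h1 hSg0.le
      calc 3 * (Real.sqrt (γ*↑n) * Real.sqrt (Ln^5))
          = Real.sqrt (γ*↑n) * (3 * Real.sqrt (Ln^5)) := by ring
        _ ≤ Real.sqrt (γ*↑n) * (3 * (c * Real.sqrt (((k:ℝ)+1)^5))) := h2
        _ = 3*c * (Real.sqrt (γ*↑n) * Real.sqrt (((k:ℝ)+1)^5)) := by ring
    have hb2 : ∑ k ∈ F2, T k
        ≤ 546 / (Real.sqrt (γ*n) * Real.sqrt (Ln^5))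
          * (Real.exp ((lam n - a n * Q) * Real.log s) * Real.exp (lam n / s)) := by
      calc ∑ k ∈ F2, T k
          ≤ ∑ k ∈ F2, 546 / (Real.sqrt (γ*n) * Real.sqrt (Ln^5)) * g k := by
            apply Finset.sum_le_sum
            intro k hk
            have hkF0 : k ∈ F0 := Finset.mem_of_mem_filter k hk
            refine (hmaster k hkF0).trans ?_
            apply mul_le_mul_of_nonneg_right ?_ (hgnn k)
            have hk8 : Ln/8 < (k:ℝ) := (Finset.mem_filter.mp hk).2.1
            have hle : Real.sqrt (Ln^5) ≤ 182 * Real.sqrt (((k:ℝ)+1)^5) := by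
              have h5 : (Ln/8)^5 ≤ ((k:ℝ)+1)^5 :=
                pow_le_pow_left₀ (by positivity) (by linarith) 5
              have heq : (182:ℝ)^2*((Ln/8)^5) = (33124/32768)*Ln^5 := by ring
              have hpw : (0:ℝ) ≤ Ln^5 := by positivity
              calc Real.sqrt (Ln^5) ≤ Real.sqrt ((182:ℝ)^2*((Ln/8)^5)) := by
                    apply Real.sqrt_le_sqrt
                    rw [heq]; linarith
                _ = 182 * Real.sqrt ((Ln/8)^5) := by
                    rw [Real.sqrt_mul (by positivity) _,
                      Real.sqrt_sq (by norm_num : (0:ℝ) ≤ 182)]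
                _ ≤ 182 * Real.sqrt (((k:ℝ)+1)^5) :=
                    mul_le_mul_of_nonneg_left (Real.sqrt_le_sqrt h5) (by norm_num)
            have := hcoef k 182 (by norm_num) hle
            calc 3 / (Real.sqrt (γ*↑n) * Real.sqrt (((k:ℝ)+1)^5))
                ≤ 3*182 / (Real.sqrt (γ*↑n) * Real.sqrt (Ln^5)) := this
              _ = 546 / (Real.sqrt (γ*↑n) * Real.sqrt (Ln^5)) := by norm_num
        _ = 546 / (Real.sqrt (γ*n) * Real.sqrt (Ln^5)) * ∑ k ∈ F2, g k := by
            rw [Finset.mul_sum]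
        _ ≤ 546 / (Real.sqrt (γ*n) * Real.sqrt (Ln^5))
            * (Real.exp ((lam n - a n * Q) * Real.log s) * Real.exp (lam n / s)) := by
            apply mul_le_mul_of_nonneg_left ?_ (by positivity)
            have := tilt_lower (lam n) s (lam n - a n * Q) hlam0 hs1 F2 hcut2
            simpa [hgdef] using this
    have hb3 : ∑ k ∈ F3, T k
        ≤ 96 / (Real.sqrt (γ*n) * Real.sqrt (Ln^5))
          * (Real.exp (-((lam n + a n * Q) * Real.log s)) * Real.exp (s * lam n)) := by
      calc ∑ k ∈ F3, T k
          ≤ ∑ k ∈ F3, 96 / (Real.sqrt (γ*n) * Real.sqrt (Ln^5)) * g k := by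
            apply Finset.sum_le_sum
            intro k hk
            have hkF0 : k ∈ F0 := Finset.mem_of_mem_filter k hk
            refine (hmaster k hkF0).trans ?_
            apply mul_le_mul_of_nonneg_right ?_ (hgnn k)
            have hk4 : (1/4)*Ln + a n * Q < (k:ℝ) := (Finset.mem_filter.mp hk).2
            have hle : Real.sqrt (Ln^5) ≤ 32 * Real.sqrt (((k:ℝ)+1)^5) := by
              have h5 : (Ln/4)^5 ≤ ((k:ℝ)+1)^5 :=
                pow_le_pow_left₀ (by positivity) (by linarith) 5
              have heq : (32:ℝ)^2*((Ln/4)^5) = Ln^5 := by ring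
              calc Real.sqrt (Ln^5) ≤ Real.sqrt ((32:ℝ)^2*((Ln/4)^5)) := by
                    apply Real.sqrt_le_sqrt
                    rw [heq]
                _ = 32 * Real.sqrt ((Ln/4)^5) := by
                    rw [Real.sqrt_mul (by positivity) _,
                      Real.sqrt_sq (by norm_num : (0:ℝ) ≤ 32)]
                _ ≤ 32 * Real.sqrt (((k:ℝ)+1)^5) :=
                    mul_le_mul_of_nonneg_left (Real.sqrt_le_sqrt h5) (by norm_num)
            have := hcoef k 32 (by norm_num) hle
            calc 3 / (Real.sqrt (γ*↑n) * Real.sqrt (((k:ℝ)+1)^5))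
                ≤ 3*32 / (Real.sqrt (γ*↑n) * Real.sqrt (Ln^5)) := this
              _ = 96 / (Real.sqrt (γ*↑n) * Real.sqrt (Ln^5)) := by norm_num
        _ = 96 / (Real.sqrt (γ*n) * Real.sqrt (Ln^5)) * ∑ k ∈ F3, g k := by
            rw [Finset.mul_sum]
        _ ≤ 96 / (Real.sqrt (γ*n) * Real.sqrt (Ln^5))
            * (Real.exp (-((lam n + a n * Q) * Real.log s)) * Real.exp (s * lam n)) := by
            apply mul_le_mul_of_nonneg_left ?_ (by positivity)
            have := tilt_upper (lam n) s (lam n + a n * Q) hlam0 hs1 F3 hcut3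
            simpa [hgdef] using this
    -- exponent estimates
    have haQd : a n * Q * d = (a n)^2/2 := by
      rw [hddef]; field_simp
    have hexp2 : Real.exp ((lam n - a n * Q) * Real.log s) * Real.exp (lam n / s)
        ≤ Real.exp (lam n) * Real.exp (-(a n)^2/4) := by
      rw [← Real.exp_add, ← Real.exp_add]
      apply Real.exp_le_exp.mpr
      have hM2nn : 0 ≤ lam n - a n * Q := by linarith
      have h1 : (lam n - a n * Q) * Real.log s ≤ (lam n - a n * Q) * d :=
        mul_le_mul_of_nonneg_left hlogs_le hM2nn
      have h2 : lam n / s ≤ lam n * (1 - d + d^2) := by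
        rw [div_eq_mul_one_div]
        exact mul_le_mul_of_nonneg_left hinv hlam0
      have h4 : lam n * d^2 ≤ (a n)^2/4 := by
        rw [hdsq]
        calc lam n * ((a n)^2/(4*Ln)) ≤ Ln * ((a n)^2/(4*Ln)) :=
              mul_le_mul_of_nonneg_right hlamLn (by positivity)
          _ = (a n)^2/4 := by field_simp
      calc (lam n - a n * Q) * Real.log s + lam n / s
          ≤ (lam n - a n * Q) * d + lam n * (1 - d + d^2) := add_le_add h1 h2
        _ = lam n - a n * Q * d + lam n * d^2 := by ring
        _ ≤ lam n + -(a n)^2/4 := by rw [haQd]; linarith [h4]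
    have hexp3 : Real.exp (-((lam n + a n * Q) * Real.log s)) * Real.exp (s * lam n)
        ≤ Real.exp (lam n) * Real.exp (-(a n)^2/4) := by
      rw [← Real.exp_add, ← Real.exp_add]
      apply Real.exp_le_exp.mpr
      have hM3nn : 0 ≤ lam n + a n * Q := by linarith
      have h1 : (lam n + a n * Q) * (d - d^2) ≤ (lam n + a n * Q) * Real.log s :=
        mul_le_mul_of_nonneg_left hlogs_ge hM3nn
      have h4 : (lam n + a n * Q) * d^2 ≤ (3/16)*(a n)^2 := by
        rw [hdsq]
        calc (lam n + a n * Q) * ((a n)^2/(4*Ln)) ≤ ((3/4)*Ln) * ((a n)^2/(4*Ln)) := by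
              apply mul_le_mul_of_nonneg_right ?_ (by positivity)
              linarith
          _ = (3/16)*(a n)^2 := by field_simp; ring
      calc -((lam n + a n * Q) * Real.log s) + s * lam n
          ≤ -((lam n + a n * Q) * (d - d^2)) + s * lam n := by linarith [h1]
        _ = lam n - a n * Q * d + (lam n + a n * Q) * d^2 := by rw [hsdef]; ring
        _ ≤ lam n + -(a n)^2/4 := by rw [haQd]; linarith [h4, sq_nonneg (a n)]
    -- prefactor
    have hpref : 1 / Real.sqrt n = Real.sqrt (Ln^5) * Real.exp A * Real.exp (-(lam n)) := by
      have h := prefactor (n:ℝ) A hn1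
      rw [← hLndef] at h
      rw [h, hlamn]
    have hsqn0 : (0:ℝ) < Real.sqrt n := Real.sqrt_pos.mpr hn0
    have h3Sg : 3 / Real.sqrt (γ*n) ≤ 1 / Real.sqrt n := by
      rw [hSgsplit, div_le_div_iff₀ (by positivity) hsqn0]
      have := mul_le_mul_of_nonneg_right hsγ hsqn0.le
      linarith
    -- final regional bounds
    have hR1 : 3 / Real.sqrt (γ*n) * (Real.exp ((Ln/4+1) * Real.log 2) * Real.exp (lam n / 2))
        ≤ Real.sqrt (Ln^5) * Real.exp A * Real.exp ((Ln/4 + 1) * Real.log 2 - lam n/2) := by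
      calc 3 / Real.sqrt (γ*n) * (Real.exp ((Ln/4+1) * Real.log 2) * Real.exp (lam n / 2))
          ≤ 1 / Real.sqrt n * (Real.exp ((Ln/4+1) * Real.log 2) * Real.exp (lam n / 2)) :=
            mul_le_mul_of_nonneg_right h3Sg (by positivity)
        _ = Real.sqrt (Ln^5) * Real.exp A
            * (Real.exp (-(lam n)) * (Real.exp ((Ln/4+1) * Real.log 2) * Real.exp (lam n / 2))) := by
            rw [hpref]; ring
        _ = Real.sqrt (Ln^5) * Real.exp A * Real.exp ((Ln/4 + 1) * Real.log 2 - lam n/2) := by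
            rw [← Real.exp_add, ← Real.exp_add]
            congr 2
            ring
    have hcoef2 : ∀ c : ℝ, 0 ≤ c → c / (Real.sqrt (γ*n) * Real.sqrt (Ln^5))
        ≤ (c/3) * Real.exp A * Real.exp (-(lam n)) := by
      intro c hc
      have h1 : c / (Real.sqrt (γ*n) * Real.sqrt (Ln^5))
          = (c/3) * (3 / Real.sqrt (γ*n)) * (1 / Real.sqrt (Ln^5)) := by
        field_simp
      rw [h1]
      have h2 : (c/3) * (3 / Real.sqrt (γ*n)) * (1 / Real.sqrt (Ln^5))
          ≤ (c/3) * (1 / Real.sqrt n) * (1 / Real.sqrt (Ln^5)) := by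
        apply mul_le_mul_of_nonneg_right ?_ (by positivity)
        exact mul_le_mul_of_nonneg_left h3Sg (by positivity)
      refine h2.trans ?_
      rw [hpref]
      apply le_of_eq
      field_simp
    have hR2 : 546 / (Real.sqrt (γ*n) * Real.sqrt (Ln^5))
          * (Real.exp ((lam n - a n * Q) * Real.log s) * Real.exp (lam n / s))
        ≤ 182 * Real.exp A * Real.exp (-(a n)^2/4) := by
      calc 546 / (Real.sqrt (γ*n) * Real.sqrt (Ln^5))
            * (Real.exp ((lam n - a n * Q) * Real.log s) * Real.exp (lam n / s))
          ≤ (546/3) * Real.exp A * Real.exp (-(lam n))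
            * (Real.exp (lam n) * Real.exp (-(a n)^2/4)) := by
            apply mul_le_mul (hcoef2 546 (by norm_num)) hexp2 (by positivity) (by positivity)
        _ = 182 * Real.exp A * (Real.exp (-(lam n)) * Real.exp (lam n)) * Real.exp (-(a n)^2/4) := by
            ring
        _ = 182 * Real.exp A * Real.exp (-(a n)^2/4) := by
            rw [← Real.exp_add, neg_add_cancel, Real.exp_zero, mul_one]
    have hR3 : 96 / (Real.sqrt (γ*n) * Real.sqrt (Ln^5))
          * (Real.exp (-((lam n + a n * Q) * Real.log s)) * Real.exp (s * lam n))
        ≤ 32 * Real.exp A * Real.exp (-(a n)^2/4) := by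
      calc 96 / (Real.sqrt (γ*n) * Real.sqrt (Ln^5))
            * (Real.exp (-((lam n + a n * Q) * Real.log s)) * Real.exp (s * lam n))
          ≤ (96/3) * Real.exp A * Real.exp (-(lam n))
            * (Real.exp (lam n) * Real.exp (-(a n)^2/4)) := by
            apply mul_le_mul (hcoef2 96 (by norm_num)) hexp3 (by positivity) (by positivity)
        _ = 32 * Real.exp A * (Real.exp (-(lam n)) * Real.exp (lam n)) * Real.exp (-(a n)^2/4) := by
            ring
        _ = 32 * Real.exp A * Real.exp (-(a n)^2/4) := by
            rw [← Real.exp_add, neg_add_cancel, Real.exp_zero, mul_one]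
    -- final assembly
    calc (∑ k ∈ F0.filter (fun k : ℕ => (k : ℝ) ∉
            Set.Icc ((1 / 4) * Ln - a n * Q) ((1 / 4) * Ln + a n * Q)), T k)
        ≤ ∑ k ∈ (F1 ∪ F2) ∪ F3, T k :=
          Finset.sum_le_sum_of_subset_of_nonneg hsub (fun k _ _ => hTnn k)
      _ = (∑ k ∈ F1, T k) + (∑ k ∈ F2, T k) + (∑ k ∈ F3, T k) := by
          rw [Finset.sum_union hd123, Finset.sum_union hd12]
      _ ≤ (Real.sqrt (Ln^5) * Real.exp A * Real.exp ((Ln/4 + 1) * Real.log 2 - lam n/2))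
          + (182 * Real.exp A * Real.exp (-(a n)^2/4))
          + (32 * Real.exp A * Real.exp (-(a n)^2/4)) := by
          have t1 := hb1.trans hR1
          have t2 := hb2.trans hR2
          have t3 := hb3.trans hR3
          linarith
      _ ≤ B n := by
          rw [hBdef]
          apply le_of_eq
          push_cast
          rw [← hLndef]
          ring
  exact squeeze_zero' hSnn hSB hBtend
end
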